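/- Let P' be a finite graded poset of rank ρ and, for each alphabet size q ≥ ρ + 1 with a packed increasing tableau, suppose every K-promotion orbit of packed tableaux in Inc^q(P') has cardinality dividing some fixed m_q. If c is a nonnegative integer such that m_q divides q + c for every q with ρ + 1 ≤ q ≤ |P'|, then in the ordinal sum P' ⊕ 𝐜 every K-promotion orbit of packed increasing tableaux (which necessarily have height q + c for some ρ+1 ≤ q ≤ |P'|) has cardinality dividing its alphabet size. (Special instance: packed tableaux on P' ⊕ 𝐜 restrict to packed tableaux on P' with the top chain labeled by the largest c values, and the orbit structures agree with alphabet size increased by c.) -/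

import Mathlib

open Classical in
/-- One swapping step of `K`-promotion: on each connected component of the Hasse
diagram of `P` restricted to elements labeled `1` or `i` that contains both labels,
swap the labels `1` and `i`. -/
noncomputable def kstep {P : Type*} [PartialOrder P] (i : ℕ) (T : P → ℕ) : P → ℕ :=
  fun p =>
    if T p = 1 ∧ ∃ y, Relation.ReflTransGen
        (fun x z => (x ⋖ z ∨ z ⋖ x) ∧ (T x = 1 ∨ T x = i) ∧ (T z = 1 ∨ T z = i)) p y ∧
        T y = i then i
    else if T p = i ∧ ∃ y, Relation.ReflTransGen
        (fun x z => (x ⋖ z ∨ z ⋖ x) ∧ (T x = 1 ∨ T x = i) ∧ (T z = 1 ∨ T z = i)) p y ∧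
        T y = 1 then 1
    else T p

open Classical in
/-- `K`-promotion of an increasing tableau of height `q`: perform the swapping steps
for `i = 2, …, q` in order, then cyclically decrement all labels (`1 ↦ q`,
`j ↦ j - 1` otherwise). -/
noncomputable def kpromo {P : Type*} [PartialOrder P] (q : ℕ) (T : P → ℕ) : P → ℕ :=
  fun p =>
    if (List.range' 2 (q - 1)).foldl (fun S i => kstep i S) T p = 1 then q
    else (List.range' 2 (q - 1)).foldl (fun S i => kstep i S) T p - 1

/-- The adjacency relation used in `kstep`. -/
def krel {P : Type*} [PartialOrder P] (i : ℕ) (T : P → ℕ) : P → P → Prop :=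
  fun x z => (x ⋖ z ∨ z ⋖ x) ∧ (T x = 1 ∨ T x = i) ∧ (T z = 1 ∨ T z = i)

section Basic
variable {P : Type*} [PartialOrder P] {i : ℕ} {T : P → ℕ} {p : P}

lemma krel_symm : Symmetric (krel i T) := by
  rintro x z ⟨h1, h2, h3⟩; exact ⟨h1.symm, h3, h2⟩

lemma kreach_symm {x z : P} (h : Relation.ReflTransGen (krel i T) x z) :
    Relation.ReflTransGen (krel i T) z x :=
  (@Relation.ReflTransGen.symmetric _ _ ⟨fun a b h => krel_symm h⟩).symm _ _ h

open Classical in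
lemma kstep_eval (i : ℕ) (T : P → ℕ) (p : P) :
    kstep i T p = if T p = 1 ∧ ∃ y, Relation.ReflTransGen (krel i T) p y ∧ T y = i then i
      else if T p = i ∧ ∃ y, Relation.ReflTransGen (krel i T) p y ∧ T y = 1 then 1
      else T p := rfl

lemma kstep_of_ne (h1 : T p ≠ 1) (h2 : T p ≠ i) : kstep i T p = T p := by
  rw [kstep_eval]; split_ifs with a b
  · exact absurd a.1 h1
  · exact absurd b.1 h2
  · rfl

lemma kstep_one_reach (h1 : T p = 1)
    (h : ∃ y, Relation.ReflTransGen (krel i T) p y ∧ T y = i) : kstep i T p = i := by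
  rw [kstep_eval, if_pos ⟨h1, h⟩]

lemma kstep_one_stuck (hi : 2 ≤ i) (h1 : T p = 1)
    (h : ¬ ∃ y, Relation.ReflTransGen (krel i T) p y ∧ T y = i) : kstep i T p = 1 := by
  rw [kstep_eval]; split_ifs with a b
  · exact absurd a.2 h
  · omega
  · exact h1

lemma kstep_top_reach (hi : 2 ≤ i) (h1 : T p = i)
    (h : ∃ y, Relation.ReflTransGen (krel i T) p y ∧ T y = 1) : kstep i T p = 1 := by
  rw [kstep_eval]; split_ifs with a b
  · obtain ⟨a1, -⟩ := a; omega
  · rfl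
  · exact absurd ⟨h1, h⟩ b

lemma kstep_top_stuck (hi : 2 ≤ i) (h1 : T p = i)
    (h : ¬ ∃ y, Relation.ReflTransGen (krel i T) p y ∧ T y = 1) : kstep i T p = i := by
  rw [kstep_eval]; split_ifs with a b
  · omega
  · exact absurd b.2 h
  · exact h1

end Basic

section FinPoset
variable {P : Type*} [PartialOrder P] [Finite P]

open Classical in
lemma exists_cov_le {x y : P} (h : x < y) : ∃ z, x ⋖ z ∧ z ≤ y := by
  cases nonempty_fintype P
  obtain ⟨m, hm, hmin⟩ := Finset.exists_minimal (s :=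
    (Finset.univ.filter fun z => x < z ∧ z ≤ y)) ⟨y, by simp [h]⟩
  simp only [Finset.mem_filter, Finset.mem_univ, true_and] at hm hmin
  refine ⟨m, ⟨hm.1, fun w hxw hwm => lt_irrefl _ (hwm.trans_le (@hmin w ⟨hxw, hwm.le.trans hm.2⟩ hwm.le))⟩, hm.2⟩

open Classical in
lemma exists_cov_lt {x y : P} (h : y < x) : ∃ z, z ⋖ x := by
  cases nonempty_fintype P
  obtain ⟨m, hm, hmax⟩ := Finset.exists_maximal (s :=
    (Finset.univ.filter fun z => z < x)) ⟨y, by simp [h]⟩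
  simp only [Finset.mem_filter, Finset.mem_univ, true_and] at hm hmax
  exact ⟨m, hm, fun w hmw hwx => lt_irrefl _ (hmw.trans_le (@hmax w hwx hmw.le))⟩

end FinPoset

section Inv
variable {P : Type*} [PartialOrder P]

/-- The invariant maintained through the swapping steps of `K`-promotion. -/
structure KInv (q i : ℕ) (S : P → ℕ) : Prop where
  lb : ∀ p, 1 ≤ S p
  ub : ∀ p, S p ≤ q
  packed : ∀ j, 1 ≤ j → j ≤ q → ∃ p, S p = j
  incr : ∀ x y : P, x < y → S x ≠ 1 → S y ≠ 1 → S x < S y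
  cov : ∀ x y : P, x ⋖ y → S x = 1 → i < S y
  below : ∀ x y : P, x < y → S y = 1 → S x ≠ 1 → S x ≤ i

variable [Finite P] {q i : ℕ} {S : P → ℕ}

lemma KInv.above (h : KInv q i S) (hi : 1 ≤ i) {x y : P} (hxy : x < y) (hx : S x = 1) :
    i < S y ∧ (S y = i + 1 → x ⋖ y) ∧ S y ≠ 1 := by
  obtain ⟨z, hzc, hzy⟩ := exists_cov_le hxy
  have hz := h.cov x z hzc hx
  rcases eq_or_lt_of_le hzy with rfl | hlt
  · exact ⟨hz, fun _ => hzc, by omega⟩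
  · have hz1 : S z ≠ 1 := by omega
    have hy1 : S y ≠ 1 := fun h1 => by have := h.below z y hlt h1 hz1; omega
    have := h.incr z y hlt hz1 hy1
    exact ⟨by omega, fun h2 => by omega, hy1⟩

lemma KInv.step (h : KInv q i S) (hi : 1 ≤ i) (hq : i + 1 ≤ q) :
    KInv q (i + 1) (kstep (i + 1) S) := by
  have hi2 : 2 ≤ i + 1 := by omega
  set N := kstep (i + 1) S with hN
  -- case analysis helper facts
  have hval : ∀ p : P, N p = S p ∨ N p = 1 ∨ N p = i + 1 := by
    intro p
    rw [hN, kstep_eval]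
    split_ifs with a b
    exacts [Or.inr (Or.inr rfl), Or.inr (Or.inl rfl), Or.inl rfl]
  constructor
  · intro p
    have := h.lb p
    rcases hval p with h' | h' | h' <;> omega
  · intro p
    have := h.ub p
    rcases hval p with h' | h' | h' <;> omega
  · -- packed
    intro j hj1 hjq
    by_cases hj : j = 1
    · subst hj
      obtain ⟨p, hp⟩ := h.packed 1 le_rfl (by omega)
      by_cases hr : ∃ y, Relation.ReflTransGen (krel (i+1) S) p y ∧ S y = i + 1
      · obtain ⟨y, hy, hyv⟩ := hr
        refine ⟨y, kstep_top_reach hi2 hyv ⟨p, kreach_symm hy, hp⟩⟩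
      · exact ⟨p, kstep_one_stuck hi2 hp hr⟩
    by_cases hj' : j = i + 1
    · subst hj'
      obtain ⟨p, hp⟩ := h.packed (i+1) (by omega) hjq
      by_cases hr : ∃ y, Relation.ReflTransGen (krel (i+1) S) p y ∧ S y = 1
      · obtain ⟨y, hy, hyv⟩ := hr
        refine ⟨y, kstep_one_reach hyv ⟨p, kreach_symm hy, hp⟩⟩
      · exact ⟨p, kstep_top_stuck hi2 hp hr⟩
    · obtain ⟨p, hp⟩ := h.packed j hj1 hjq
      exact ⟨p, by rw [hN, kstep_of_ne (by omega : S p ≠ 1) (by omega : S p ≠ i + 1)]; exact hp⟩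
  · -- incr
    intro x y hxy hx1 hy1
    by_cases hsx1 : S x = 1
    · -- then N x = i + 1 (with a reach) since N x ≠ 1
      have hrx : ∃ y', Relation.ReflTransGen (krel (i+1) S) x y' ∧ S y' = i + 1 := by
        by_contra hr
        exact hx1 (kstep_one_stuck hi2 hsx1 hr)
      have hNx : N x = i + 1 := kstep_one_reach hsx1 hrx
      obtain ⟨hgt, hcv, hys1⟩ := h.above hi hxy hsx1
      by_cases hsy : S y = i + 1
      · -- y is adjacent to x, hence reaches the 1 at x, so N y = 1 : contradiction
        have : N y = 1 := kstep_top_reach hi2 hsy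
          ⟨x, Relation.ReflTransGen.single
            ⟨Or.inr (hcv hsy), Or.inr hsy, Or.inl hsx1⟩, hsx1⟩
        exact absurd this hy1
      · have hNy : N y = S y := kstep_of_ne hys1 hsy
        rw [hNx, hNy]; omega
    · by_cases hsx : S x = i + 1
      · -- N x = i + 1 (no reach, else N x = 1)
        have hrx : ¬ ∃ y', Relation.ReflTransGen (krel (i+1) S) x y' ∧ S y' = 1 := by
          intro hr; exact hx1 (kstep_top_reach hi2 hsx hr)
        have hNx : N x = i + 1 := kstep_top_stuck hi2 hsx hrx
        have hys1 : S y ≠ 1 := by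
          intro h1
          have := h.below x y hxy h1 hsx1; omega
        have hlt := h.incr x y hxy hsx1 hys1
        have hNy : N y = S y := kstep_of_ne hys1 (by omega)
        rw [hNx, hNy]; omega
      · have hNx : N x = S x := kstep_of_ne hsx1 hsx
        by_cases hsy1 : S y = 1
        · -- N y must be i+1
          have hry : ∃ y', Relation.ReflTransGen (krel (i+1) S) y y' ∧ S y' = i + 1 := by
            by_contra hr
            exact hy1 (kstep_one_stuck hi2 hsy1 hr)
          have hNy : N y = i + 1 := kstep_one_reach hsy1 hry
          have := h.below x y hxy hsy1 hsx1
          rw [hNx, hNy]; omega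
        · by_cases hsy : S y = i + 1
          · have hry : ¬ ∃ y', Relation.ReflTransGen (krel (i+1) S) y y' ∧ S y' = 1 := by
              intro hr; exact hy1 (kstep_top_reach hi2 hsy hr)
            have hNy : N y = i + 1 := kstep_top_stuck hi2 hsy hry
            have := h.incr x y hxy hsx1 hsy1
            rw [hNx, hNy]; omega
          · have hNy : N y = S y := kstep_of_ne hsy1 hsy
            rw [hNx, hNy]; exact h.incr x y hxy hsx1 hsy1
  · -- cov
    intro x y hxy hx1
    by_cases hsx1 : S x = 1
    · have hrx : ¬ ∃ y', Relation.ReflTransGen (krel (i+1) S) x y' ∧ S y' = i + 1 := by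
        intro hr
        have : N x = i + 1 := kstep_one_reach hsx1 hr
        omega
      have hyold := h.cov x y hxy hsx1
      have hsy : S y ≠ i + 1 := by
        intro hsy
        exact hrx ⟨y, Relation.ReflTransGen.single
          ⟨Or.inl hxy, Or.inl hsx1, Or.inr hsy⟩, hsy⟩
      have hNy : N y = S y := kstep_of_ne (by omega) hsy
      omega
    · have hsx : S x = i + 1 := by
        rw [hN, kstep_eval] at hx1
        split_ifs at hx1 with a b
        · omega
        · exact b.1
        · exact absurd hx1 hsx1
      have hsy1 : S y ≠ 1 := by
        intro h1
        have := h.below x y hxy.lt h1 hsx1; omega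
      have := h.incr x y hxy.lt hsx1 hsy1
      have hNy : N y = S y := kstep_of_ne hsy1 (by omega)
      omega
  · -- below
    intro x y hxy hy1 hx1
    have hycases : S y = 1 ∨ S y = i + 1 := by
      rw [hN, kstep_eval] at hy1
      split_ifs at hy1 with a b
      · omega
      · exact Or.inr b.1
      · exact Or.inl hy1
    rcases hycases with hsy | hsy
    · have hsx1 : S x ≠ 1 := fun h1 => (h.above hi hxy h1).2.2 hsy
      have hle := h.below x y hxy hsy hsx1
      have hNx : N x = S x := kstep_of_ne hsx1 (by omega)
      omega
    · by_cases hsx1 : S x = 1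
      · rcases hval x with h' | h' | h' <;> omega
      · have hsx : S x ≠ i + 1 := by
          intro hsx
          have := h.incr x y hxy hsx1 (by omega); omega
        have hNx : N x = S x := kstep_of_ne hsx1 hsx
        have := h.incr x y hxy hsx1 (by omega)
        omega

lemma KInv.fold (h : KInv q 1 S) :
    ∀ n, 1 + n ≤ q → KInv q (1 + n) ((List.range' 2 n).foldl (fun S i => kstep i S) S) := by
  intro n
  induction n with
  | zero => intro _; simpa using h
  | succ n ih =>
    intro hn
    rw [List.range'_1_concat, List.foldl_append, List.foldl_cons, List.foldl_nil]
    have := (ih (by omega)).step (by omega) (by omega)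
    have e : 1 + n + 1 = 1 + (n + 1) := by omega
    have e2 : 2 + n = 1 + n + 1 := by omega
    rw [e] at this
    rw [e2]
    exact this

end Inv
section PIT
variable {P : Type*} [PartialOrder P]

/-- Packed increasing tableau of height `q`. -/
structure IsPIT (q : ℕ) (T : P → ℕ) : Prop where
  lb : ∀ p, 1 ≤ T p
  ub : ∀ p, T p ≤ q
  incr : ∀ x y : P, x < y → T x < T y
  packed : ∀ j, 1 ≤ j → j ≤ q → ∃ p, T p = j

/-- The result of all swapping steps of `K`-promotion. -/
noncomputable def kfold (q : ℕ) (T : P → ℕ) : P → ℕ :=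
  (List.range' 2 (q - 1)).foldl (fun S i => kstep i S) T

lemma kpromo_eval (q : ℕ) (T : P → ℕ) (p : P) :
    kpromo q T p = if kfold q T p = 1 then q else kfold q T p - 1 := rfl

variable [Finite P] {q : ℕ} {T : P → ℕ}

lemma IsPIT.kinv (h : IsPIT q T) : KInv q 1 T where
  lb := h.lb
  ub := h.ub
  packed := h.packed
  incr := fun x y hxy _ _ => h.incr x y hxy
  cov := fun x y hxy hx => by have := h.incr x y hxy.lt; omega
  below := fun x y hxy hy _ => by have := h.incr x y hxy; omega

lemma IsPIT.kfold_kinv (h : IsPIT q T) (hq : 1 ≤ q) : KInv q q (kfold q T) := by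
  have h2 := h.kinv.fold (q - 1) (by omega)
  have e : 1 + (q - 1) = q := by omega
  rw [e] at h2; exact h2

lemma kfold_one_max (hq : 1 ≤ q) (h : KInv q q (kfold q T)) {p : P} (hp : kfold q T p = 1) :
    ∀ y, ¬ p < y := by
  intro y hy
  have h1 := (h.above hq hy hp).1
  have h2 := h.ub y
  omega

lemma IsPIT.promo (h : IsPIT q T) (hq : 1 ≤ q) : IsPIT q (kpromo q T) := by
  have hF := h.kfold_kinv hq
  constructor
  · intro p
    rw [kpromo_eval]
    have := hF.lb p
    split_ifs <;> omega
  · intro p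
    rw [kpromo_eval]
    have := hF.ub p
    split_ifs <;> omega
  · intro x y hxy
    rw [kpromo_eval, kpromo_eval]
    split_ifs with h1 h2 h3
    · exact absurd hxy (kfold_one_max hq hF h1 y)
    · exact absurd hxy (kfold_one_max hq hF h1 y)
    · have := hF.ub x; omega
    · have := hF.incr x y hxy h1 h3
      have := hF.lb x
      omega
  · intro j hj1 hjq
    by_cases hj : j = q
    · obtain ⟨p, hp⟩ := hF.packed 1 le_rfl hq
      exact ⟨p, by rw [kpromo_eval, if_pos hp, hj]⟩
    · obtain ⟨p, hp⟩ := hF.packed (j + 1) (by omega) (by omega)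
      refine ⟨p, ?_⟩
      rw [kpromo_eval, if_neg (by omega)]
      omega

end PIT
section SumPoset
variable {P : Type*} [PartialOrder P] {c : ℕ}

lemma PC_cases (z : P ⊕ₗ Fin c) :
    (∃ p : P, z = toLex (Sum.inl p)) ∨ (∃ k : Fin c, z = toLex (Sum.inr k)) := by
  rcases h : ofLex z with p | k
  · exact Or.inl ⟨p, by rw [← toLex_ofLex z, h]⟩
  · exact Or.inr ⟨k, by rw [← toLex_ofLex z, h]⟩

lemma covl {a b : P} : (toLex (Sum.inl a) : P ⊕ₗ Fin c) ⋖ toLex (Sum.inl b) ↔ a ⋖ b := by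
  constructor
  · rintro ⟨hlt, hmid⟩
    exact ⟨Sum.Lex.inl_lt_inl_iff.1 hlt, fun w hw1 hw2 =>
      hmid (Sum.Lex.inl_lt_inl_iff.2 hw1) (Sum.Lex.inl_lt_inl_iff.2 hw2)⟩
  · rintro ⟨hlt, hmid⟩
    refine ⟨Sum.Lex.inl_lt_inl_iff.2 hlt, fun z hz1 hz2 => ?_⟩
    rcases PC_cases z with ⟨p, rfl⟩ | ⟨k, rfl⟩
    · exact hmid (Sum.Lex.inl_lt_inl_iff.1 hz1) (Sum.Lex.inl_lt_inl_iff.1 hz2)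
    · exact Sum.Lex.not_inr_lt_inl hz2

lemma covr {j k : Fin c} (h : (j : ℕ) + 1 = (k : ℕ)) :
    (toLex (Sum.inr j) : P ⊕ₗ Fin c) ⋖ toLex (Sum.inr k) := by
  refine ⟨Sum.Lex.inr_lt_inr_iff.2 (by rw [Fin.lt_def]; omega), fun z hz1 hz2 => ?_⟩
  rcases PC_cases z with ⟨p, rfl⟩ | ⟨m, rfl⟩
  · exact Sum.Lex.not_inr_lt_inl hz1
  · have h1 := Sum.Lex.inr_lt_inr_iff.1 hz1
    have h2 := Sum.Lex.inr_lt_inr_iff.1 hz2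
    rw [Fin.lt_def] at h1 h2; omega

lemma cov_top {a : P} (ha : ∀ y, ¬ a < y) {k : Fin c} (hk : (k : ℕ) = 0) :
    (toLex (Sum.inl a) : P ⊕ₗ Fin c) ⋖ toLex (Sum.inr k) := by
  refine ⟨Sum.Lex.inl_lt_inr a k, fun z hz1 hz2 => ?_⟩
  rcases PC_cases z with ⟨p, rfl⟩ | ⟨m, rfl⟩
  · exact ha p (Sum.Lex.inl_lt_inl_iff.1 hz1)
  · have h2 := Sum.Lex.inr_lt_inr_iff.1 hz2
    rw [Fin.lt_def] at h2; omega

/-- Extension of a tableau on `P` by forced chain labels `q+1, …, q+c`. -/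
def extT (q : ℕ) (T : P → ℕ) : (P ⊕ₗ Fin c) → ℕ :=
  fun x => Sum.elim T (fun k : Fin c => q + 1 + (k : ℕ)) (ofLex x)

lemma extT_inl (q : ℕ) (T : P → ℕ) (p : P) : extT (c := c) q T (toLex (Sum.inl p)) = T p := rfl

lemma extT_inr (q : ℕ) (T : P → ℕ) (k : Fin c) :
    extT q T (toLex (Sum.inr k)) = q + 1 + (k : ℕ) := rfl

lemma reach_inl {i q : ℕ} (hi : 2 ≤ i) (hiq : i ≤ q) (S : P → ℕ) {p : P} {x : P ⊕ₗ Fin c}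
    (h : Relation.ReflTransGen (krel i (extT q S)) (toLex (Sum.inl p)) x) :
    ∃ b : P, x = toLex (Sum.inl b) ∧ Relation.ReflTransGen (krel i S) p b := by
  induction h with
  | refl => exact ⟨p, rfl, Relation.ReflTransGen.refl⟩
  | @tail w z h1 h2 ih =>
    obtain ⟨b, rfl, hb⟩ := ih
    obtain ⟨hcov, hL1, hL2⟩ := h2
    rcases PC_cases z with ⟨b', rfl⟩ | ⟨k, rfl⟩
    · refine ⟨b', rfl, hb.tail ⟨?_, ?_, ?_⟩⟩
      · rcases hcov with h' | h'
        · exact Or.inl (covl.1 h')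
        · exact Or.inr (covl.1 h')
      · exact hL1
      · exact hL2
    · rw [extT_inr] at hL2
      exfalso
      rcases hL2 with h' | h' <;> omega

lemma reach_inl' {i q : ℕ} (S : P → ℕ) {p b : P}
    (h : Relation.ReflTransGen (krel i S) p b) :
    Relation.ReflTransGen (krel i (extT (c := c) q S))
      (toLex (Sum.inl p)) (toLex (Sum.inl b)) := by
  induction h with
  | refl => exact Relation.ReflTransGen.refl
  | @tail w z h1 h2 ih =>
    obtain ⟨hcov, hL1, hL2⟩ := h2
    refine ih.tail ⟨?_, ?_, ?_⟩
    · rcases hcov with h' | h'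
      · exact Or.inl (covl.2 h')
      · exact Or.inr (covl.2 h')
    · exact hL1
    · exact hL2

lemma kstep_ext {i q : ℕ} (hi : 2 ≤ i) (hiq : i ≤ q) (S : P → ℕ) :
    kstep i (extT (c := c) q S) = extT q (kstep i S) := by
  funext x
  rcases PC_cases x with ⟨p, rfl⟩ | ⟨k, rfl⟩
  · rw [extT_inl]
    by_cases h1 : S p = 1
    · by_cases hr : ∃ b, Relation.ReflTransGen (krel i S) p b ∧ S b = i
      · obtain ⟨b, hb, hbv⟩ := hr
        rw [kstep_one_reach (T := extT q S) (by rw [extT_inl]; exact h1)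
            ⟨toLex (Sum.inl b), reach_inl' S hb, by rw [extT_inl]; exact hbv⟩,
          kstep_one_reach h1 ⟨b, hb, hbv⟩]
      · have hr' : ¬ ∃ y, Relation.ReflTransGen (krel i (extT (c := c) q S))
            (toLex (Sum.inl p)) y ∧ extT q S y = i := by
          rintro ⟨y, hy, hyv⟩
          obtain ⟨b, rfl, hb⟩ := reach_inl hi hiq S hy
          rw [extT_inl] at hyv
          exact hr ⟨b, hb, hyv⟩
        rw [kstep_one_stuck hi (by rw [extT_inl]; exact h1) hr',
          kstep_one_stuck hi h1 hr]
    · by_cases h2 : S p = i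
      · by_cases hr : ∃ b, Relation.ReflTransGen (krel i S) p b ∧ S b = 1
        · obtain ⟨b, hb, hbv⟩ := hr
          rw [kstep_top_reach hi (T := extT q S) (by rw [extT_inl]; exact h2)
              ⟨toLex (Sum.inl b), reach_inl' S hb, by rw [extT_inl]; exact hbv⟩,
            kstep_top_reach hi h2 ⟨b, hb, hbv⟩]
        · have hr' : ¬ ∃ y, Relation.ReflTransGen (krel i (extT (c := c) q S))
              (toLex (Sum.inl p)) y ∧ extT q S y = 1 := by
            rintro ⟨y, hy, hyv⟩
            obtain ⟨b, rfl, hb⟩ := reach_inl hi hiq S hy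
            rw [extT_inl] at hyv
            exact hr ⟨b, hb, hyv⟩
          rw [kstep_top_stuck hi (by rw [extT_inl]; exact h2) hr',
            kstep_top_stuck hi h2 hr]
      · rw [kstep_of_ne (T := extT q S) (by rw [extT_inl]; exact h1)
            (by rw [extT_inl]; exact h2), extT_inl,
          kstep_of_ne h1 h2]
  · rw [kstep_of_ne (T := extT q S) (by rw [extT_inr]; omega) (by rw [extT_inr]; omega)]
    rfl

lemma kfold_ext {q : ℕ} (T : P → ℕ) :
    ∀ n, n + 1 ≤ q →
      (List.range' 2 n).foldl (fun S i => kstep i S) (extT (c := c) q T)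
        = extT q ((List.range' 2 n).foldl (fun S i => kstep i S) T) := by
  intro n
  induction n with
  | zero => intro _; simp
  | succ n ih =>
    intro hn
    rw [List.range'_1_concat, List.foldl_append, List.foldl_append, List.foldl_cons,
      List.foldl_cons, List.foldl_nil, List.foldl_nil, ih (by omega),
      kstep_ext (by omega) (by omega)]

end SumPoset
section Climb
variable {P : Type*} [PartialOrder P] {c : ℕ}

/-- Intermediate states while the label `1` climbs the chain. -/
def Wfun (q : ℕ) (F' : P → ℕ) (t : ℕ) : (P ⊕ₗ Fin c) → ℕ :=
  fun x => Sum.elim F'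
    (fun k : Fin c => if (k : ℕ) < t then q + 2 + (k : ℕ)
      else if (k : ℕ) = t then 1 else q + 1 + (k : ℕ)) (ofLex x)

lemma Wfun_inl (q : ℕ) (F' : P → ℕ) (t : ℕ) (p : P) :
    Wfun (c := c) q F' t (toLex (Sum.inl p)) = F' p := rfl

lemma Wfun_inr (q : ℕ) (F' : P → ℕ) (t : ℕ) (k : Fin c) :
    Wfun q F' t (toLex (Sum.inr k)) = if (k : ℕ) < t then q + 2 + (k : ℕ)
      else if (k : ℕ) = t then 1 else q + 1 + (k : ℕ) := rfl

lemma kstep_swap {q : ℕ} (hq : 1 ≤ q) {F : P → ℕ}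
    (hub : ∀ p, F p ≤ q) (hex : ∃ p, F p = 1)
    (hmax : ∀ p, F p = 1 → ∀ y, ¬ p < y) (hc : 0 < c) :
    kstep (q + 1) (extT (c := c) q F) = Wfun q (fun p => if F p = 1 then q + 1 else F p) 0 := by
  funext x
  rcases PC_cases x with ⟨p, rfl⟩ | ⟨k, rfl⟩
  · rw [Wfun_inl]
    by_cases h1 : F p = 1
    · rw [if_pos h1]
      refine kstep_one_reach (by rw [extT_inl]; exact h1)
        ⟨toLex (Sum.inr (⟨0, hc⟩ : Fin c)),
          Relation.ReflTransGen.single ⟨Or.inl (cov_top (hmax p h1) rfl), ?_, ?_⟩, ?_⟩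
      · rw [extT_inl]; exact Or.inl h1
      · rw [extT_inr]; right; rfl
      · rw [extT_inr]; rfl
    · rw [if_neg h1,
        kstep_of_ne (T := extT q F) (by rw [extT_inl]; exact h1)
          (by rw [extT_inl]; have := hub p; omega), extT_inl]
  · by_cases hk0 : (k : ℕ) = 0
    · rw [Wfun_inr, if_neg (by omega), if_pos hk0]
      obtain ⟨p0, hp0⟩ := hex
      refine kstep_top_reach (by omega) (by rw [extT_inr, hk0]) ⟨toLex (Sum.inl p0),
        Relation.ReflTransGen.single ⟨Or.inr (cov_top (hmax p0 hp0) hk0), ?_, ?_⟩, ?_⟩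
      · rw [extT_inr]; right; rw [hk0]
      · rw [extT_inl]; exact Or.inl hp0
      · rw [extT_inl]; exact hp0
    · rw [kstep_of_ne (T := extT q F) (by rw [extT_inr]; omega)
        (by rw [extT_inr]; omega), extT_inr, Wfun_inr, if_neg (by omega), if_neg hk0]

lemma kstep_climb {q t : ℕ} {F' : P → ℕ} (hF : ∀ p, 2 ≤ F' p ∧ F' p ≤ q + 1)
    (htc : t + 1 < c) :
    kstep (q + 2 + t) (Wfun (c := c) q F' t) = Wfun q F' (t + 1) := by
  funext x
  rcases PC_cases x with ⟨p, rfl⟩ | ⟨k, rfl⟩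
  · rw [kstep_of_ne (T := Wfun q F' t) (by rw [Wfun_inl]; have := (hF p).1; omega)
      (by rw [Wfun_inl]; have := (hF p).2; omega)]
    rfl
  · rcases Nat.lt_trichotomy (k : ℕ) t with hk | hk | hk
    · rw [kstep_of_ne (T := Wfun q F' t)
        (by rw [Wfun_inr, if_pos hk]; omega)
        (by rw [Wfun_inr, if_pos hk]; omega), Wfun_inr, Wfun_inr,
        if_pos hk, if_pos (by omega)]
    · -- k = t : holds label 1, swaps up
      have hvk : Wfun (c := c) q F' t (toLex (Sum.inr k)) = 1 := by
        rw [Wfun_inr, if_neg (by omega), if_pos hk]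
      have hnext : Wfun (c := c) q F' t (toLex (Sum.inr (⟨t + 1, htc⟩ : Fin c)))
          = q + 2 + t := by
        have e : ((⟨t + 1, htc⟩ : Fin c) : ℕ) = t + 1 := rfl
        rw [Wfun_inr, e, if_neg (by omega), if_neg (by omega)]
        omega
      rw [Wfun_inr, if_pos (show (k : ℕ) < t + 1 by omega)]
      rw [kstep_one_reach hvk ⟨_, Relation.ReflTransGen.single
        ⟨Or.inl (covr (show (k : ℕ) + 1 = ((⟨t + 1, htc⟩ : Fin c) : ℕ) by rw [hk])),
          Or.inl hvk, Or.inr hnext⟩, hnext⟩]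
      omega
    · by_cases hk1 : (k : ℕ) = t + 1
      · -- k = t + 1 : holds label i, swaps down to 1
        have htlt : t < c := by omega
        have hvk : Wfun (c := c) q F' t (toLex (Sum.inr k)) = q + 2 + t := by
          rw [Wfun_inr, if_neg (by omega), if_neg (by omega)]; omega
        have hprev : Wfun (c := c) q F' t (toLex (Sum.inr (⟨t, htlt⟩ : Fin c))) = 1 := by
          have e : ((⟨t, htlt⟩ : Fin c) : ℕ) = t := rfl
          rw [Wfun_inr, e, if_neg (by omega), if_pos rfl]
        rw [Wfun_inr, if_neg (by omega), if_pos hk1]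
        exact kstep_top_reach (by omega) hvk
          ⟨_, Relation.ReflTransGen.single
            ⟨Or.inr (covr (show ((⟨t, htlt⟩ : Fin c) : ℕ) + 1 = (k : ℕ) by rw [hk1])),
              Or.inr hvk, Or.inl hprev⟩, hprev⟩
      · -- k > t + 1 : untouched
        rw [kstep_of_ne (T := Wfun q F' t)
          (by rw [Wfun_inr, if_neg (by omega), if_neg (by omega)]; omega)
          (by rw [Wfun_inr, if_neg (by omega), if_neg (by omega)]; omega),
          Wfun_inr, Wfun_inr, if_neg (by omega), if_neg (by omega),
          if_neg (by omega), if_neg (by omega)]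

lemma climb_fold {q : ℕ} {F' : P → ℕ} (hF : ∀ p, 2 ≤ F' p ∧ F' p ≤ q + 1) :
    ∀ t, t < c →
      (List.range' (q + 2) t).foldl (fun S i => kstep i S) (Wfun (c := c) q F' 0)
        = Wfun q F' t := by
  intro t
  induction t with
  | zero => intro _; rfl
  | succ t ih =>
    intro ht
    rw [List.range'_1_concat, List.foldl_append, List.foldl_cons, List.foldl_nil,
      ih (by omega), kstep_climb hF ht]

end Climb
section MainComm
variable {P : Type*} [PartialOrder P] [Finite P] {c : ℕ}

lemma kfold_sum_eq {q : ℕ} (hq : 1 ≤ q) (T : P → ℕ) :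
    kfold (q + c) (extT (c := c) q T)
      = (List.range' (q + 1) c).foldl (fun S i => kstep i S) (extT q (kfold q T)) := by
  have hsplit : List.range' 2 (q + c - 1) = List.range' 2 (q - 1) ++ List.range' (q + 1) c := by
    have e1 : q + 1 = 2 + (q - 1) := by omega
    have e2 : q + c - 1 = c + (q - 1) := by omega
    rw [e1, e2]
    rw [Nat.add_comm c (q - 1)]; exact (List.range'_append_1 (s := 2) (m := q - 1) (n := c)).symm
  show (List.range' 2 (q + c - 1)).foldl (fun S i => kstep i S) (extT (c := c) q T) = _
  rw [hsplit, List.foldl_append, kfold_ext T (q - 1) (by omega)]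
  rfl

lemma kpromo_ext {q : ℕ} (hq : 1 ≤ q) {T : P → ℕ} (hT : IsPIT q T) :
    kpromo (q + c) (extT (c := c) q T) = extT q (kpromo q T) := by
  have hF := hT.kfold_kinv hq
  rcases Nat.eq_zero_or_pos c with hc | hc
  · -- no chain: trivial
    subst hc
    have hkf : kfold (q + 0) (extT (c := 0) q T) = extT q (kfold q T) := by
      rw [kfold_sum_eq hq T]; rfl
    funext x
    rcases PC_cases x with ⟨p, rfl⟩ | ⟨k, rfl⟩
    · rw [kpromo_eval, hkf, extT_inl, extT_inl, kpromo_eval]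
      split_ifs <;> omega
    · exact absurd k.isLt (by omega)
  · -- chain present
    set F' : P → ℕ := fun p => if kfold q T p = 1 then q + 1 else kfold q T p with hF'
    have hF'b : ∀ p, 2 ≤ F' p ∧ F' p ≤ q + 1 := by
      intro p
      have h1 := hF.lb p
      have h2 := hF.ub p
      rw [hF']
      dsimp only
      split_ifs <;> omega
    have hkf : kfold (q + c) (extT (c := c) q T) = Wfun q F' (c - 1) := by
      rw [kfold_sum_eq hq T]
      have e : c = (c - 1) + 1 := by omega
      rw [e, List.range'_succ, List.foldl_cons,
        kstep_swap hq hF.ub (hF.packed 1 le_rfl hq) (fun p hp => kfold_one_max hq hF hp)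
          (by omega), ← hF']
      have e2 : q + 1 + 1 = q + 2 := by omega
      rw [e2, climb_fold hF'b (c - 1) (by omega)]
      have e3 : c - 1 + 1 - 1 = c - 1 := by omega
      rw [e3]
    funext x
    rcases PC_cases x with ⟨p, rfl⟩ | ⟨k, rfl⟩
    · rw [kpromo_eval, hkf, Wfun_inl, extT_inl, kpromo_eval]
      have h1 := hF.lb p
      have h2 := hF.ub p
      have hv : F' p = if kfold q T p = 1 then q + 1 else kfold q T p := by rw [hF']
      split_ifs at hv ⊢ <;> omega
    · rw [kpromo_eval, hkf, Wfun_inr, extT_inr]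
      have hklt : (k : ℕ) < c := k.isLt
      split_ifs <;> omega

lemma kpromo_ext_iter {q : ℕ} (hq : 1 ≤ q) {T : P → ℕ} (hT : IsPIT q T) (n : ℕ) :
    (kpromo (q + c))^[n] (extT (c := c) q T) = extT q ((kpromo q)^[n] T) := by
  induction n generalizing T with
  | zero => rfl
  | succ n ih =>
    rw [Function.iterate_succ_apply, Function.iterate_succ_apply, kpromo_ext hq hT,
      ih (hT.promo hq)]

lemma extT_injective (q : ℕ) :
    Function.Injective (extT (c := c) (P := P) q) := by
  intro S1 S2 h
  funext p
  have := congrFun h (toLex (Sum.inl p))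
  rwa [extT_inl, extT_inl] at this

end MainComm
section Forced
variable {P : Type*} [PartialOrder P] {c : ℕ}

lemma chain_forced {q' : ℕ} {U : (P ⊕ₗ Fin c) → ℕ} (hcpos : 0 < c)
    (hb : ∀ p, 1 ≤ U p ∧ U p ≤ q')
    (hincr : ∀ x y : P ⊕ₗ Fin c, x < y → U x < U y)
    (hpack : ∀ i, 1 ≤ i → i ≤ q' → ∃ p, U p = i) :
    ∃ q, q' = q + c ∧ ∀ k : Fin c, U (toLex (Sum.inr k)) = q + 1 + (k : ℕ) := by
  have gap : ∀ d (j k : Fin c), (j : ℕ) + d = (k : ℕ) →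
      U (toLex (Sum.inr j)) + d ≤ U (toLex (Sum.inr k)) := by
    intro d
    induction d with
    | zero =>
      intro j k h
      have : j = k := Fin.ext (by omega)
      subst this; omega
    | succ d ih =>
      intro j k h
      have hm : (j : ℕ) + d < c := by have := k.isLt; omega
      have h1 := ih j ⟨(j : ℕ) + d, hm⟩ rfl
      have h2 : U (toLex (Sum.inr (⟨(j : ℕ) + d, hm⟩ : Fin c))) < U (toLex (Sum.inr k)) :=
        hincr _ _ (Sum.Lex.inr_lt_inr_iff.2
          (Fin.lt_def.2 (show ((j : ℕ) + d) < (k : ℕ) by omega)))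
      omega
  have hc1 : c - 1 < c := by omega
  have htop := (hb (toLex (Sum.inr (⟨c - 1, hc1⟩ : Fin c)))).2
  have h0top : U (toLex (Sum.inr (⟨0, hcpos⟩ : Fin c))) + (c - 1)
      ≤ U (toLex (Sum.inr (⟨c - 1, hc1⟩ : Fin c))) :=
    gap (c - 1) _ _ (show 0 + (c - 1) = c - 1 by omega)
  have hU01 : 1 ≤ U (toLex (Sum.inr (⟨0, hcpos⟩ : Fin c))) :=
    (hb (toLex (Sum.inr (⟨0, hcpos⟩ : Fin c)))).1
  -- lower bound for U (inr 0) via pigeonhole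
  have hlow : q' + 1 ≤ U (toLex (Sum.inr (⟨0, hcpos⟩ : Fin c))) + c := by
    by_contra hlow'
    have hval : ∀ d, d ≤ c → ∃ k : Fin c,
        U (toLex (Sum.inr k)) = U (toLex (Sum.inr (⟨0, hcpos⟩ : Fin c))) + d := by
      intro d hd
      obtain ⟨x, hx⟩ := hpack (U (toLex (Sum.inr (⟨0, hcpos⟩ : Fin c))) + d)
        (by omega) (by omega)
      rcases PC_cases x with ⟨p, rfl⟩ | ⟨k, rfl⟩
      · exfalso
        have h2 := hincr _ _ (Sum.Lex.inl_lt_inr p (⟨0, hcpos⟩ : Fin c))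
        omega
      · exact ⟨k, hx⟩
    choose f hf using fun d : Fin (c + 1) => hval d (Nat.lt_succ_iff.1 d.isLt)
    have hinj : Function.Injective f := by
      intro d1 d2 h
      have ha := hf d1
      have hb' := hf d2
      rw [h] at ha
      exact Fin.ext (by omega)
    have hcard := Fintype.card_le_of_injective f hinj
    simp only [Fintype.card_fin] at hcard
    omega
  refine ⟨U (toLex (Sum.inr (⟨0, hcpos⟩ : Fin c))) - 1, by omega, fun k => ?_⟩
  have hlo : U (toLex (Sum.inr (⟨0, hcpos⟩ : Fin c))) + (k : ℕ) ≤ U (toLex (Sum.inr k)) :=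
    gap (k : ℕ) _ _ (show 0 + (k : ℕ) = (k : ℕ) by omega)
  have hhi : U (toLex (Sum.inr k)) + (c - 1 - (k : ℕ))
      ≤ U (toLex (Sum.inr (⟨c - 1, hc1⟩ : Fin c))) :=
    gap (c - 1 - (k : ℕ)) _ _ (show (k : ℕ) + (c - 1 - (k : ℕ)) = c - 1 by
      have := k.isLt; omega)
  omega

end Forced

section Rank
variable {P : Type*} [PartialOrder P] [Finite P]

lemma rk_lt_of_pit (rk : P → ℕ) (hrmin : ∀ x : P, (∀ y, ¬ y < x) → rk x = 0)
    (hrcov : ∀ x y : P, x ⋖ y → rk y = rk x + 1)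
    {q : ℕ} {T : P → ℕ} (hT : IsPIT q T) : ∀ x, rk x < T x := by
  intro x
  induction x using WellFoundedLT.induction with
  | _ x ih =>
    by_cases hmin : ∀ y, ¬ y < x
    · rw [hrmin x hmin]
      exact hT.lb x
    · push_neg at hmin
      obtain ⟨y, hy⟩ := hmin
      obtain ⟨z, hz⟩ := exists_cov_lt hy
      have h1 := ih z hz.lt
      have h2 := hrcov z x hz
      have h3 := hT.incr z x hz.lt
      omega

end Rank

/-- Let `P` be a finite graded poset of rank `ρ` such that for each alphabet size
`q ≥ ρ + 1` every `K`-promotion orbit of packed increasing tableaux in `Inc^q(P)` has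
cardinality dividing `m q`.  If `c` is such that `m q ∣ q + c` for all
`ρ + 1 ≤ q ≤ |P|`, then in the ordinal sum `P ⊕ 𝐜` every `K`-promotion orbit of
packed increasing tableaux has cardinality dividing its alphabet size. -/
theorem ordinal_sum_NRP {P : Type*} [PartialOrder P] [Fintype P]
    (ρ : ℕ) (rk : P → ℕ)
    (hrmin : ∀ x : P, (∀ y, ¬ y < x) → rk x = 0)
    (hrcov : ∀ x y : P, x ⋖ y → rk y = rk x + 1)
    (hrmax : ∀ x : P, (∀ y, ¬ x < y) → rk x = ρ)
    (c : ℕ) (m : ℕ → ℕ)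
    (hm : ∀ q : ℕ, ρ + 1 ≤ q → ∀ T : P → ℕ,
      (∀ p, 1 ≤ T p ∧ T p ≤ q) → (∀ x y : P, x < y → T x < T y) →
      (∀ i : ℕ, 1 ≤ i → i ≤ q → ∃ p, T p = i) →
      Set.ncard {S | ∃ n : ℕ, (kpromo q)^[n] T = S} ∣ m q)
    (hc : ∀ q : ℕ, ρ + 1 ≤ q → q ≤ Fintype.card P → m q ∣ q + c) :
    ∀ (q' : ℕ) (U : (P ⊕ₗ Fin c) → ℕ),
      (∀ p, 1 ≤ U p ∧ U p ≤ q') →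
      (∀ x y : P ⊕ₗ Fin c, x < y → U x < U y) →
      (∀ i : ℕ, 1 ≤ i → i ≤ q' → ∃ p, U p = i) →
      Set.ncard {S | ∃ n : ℕ, (kpromo q')^[n] U = S} ∣ q' := by
  intro q' U hb hincr hpack
  by_cases hP : Nonempty P
  · -- P nonempty : transfer to the orbit on P
    obtain ⟨p0⟩ := hP
    have hq'1 : 1 ≤ q' := le_trans (hb (toLex (Sum.inl p0))).1 (hb (toLex (Sum.inl p0))).2
    have main : ∃ q : ℕ, 1 ≤ q ∧ q' = q + c ∧
        U = extT (c := c) q (fun p => U (toLex (Sum.inl p))) ∧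
        IsPIT q (fun p => U (toLex (Sum.inl p))) := by
      rcases Nat.eq_zero_or_pos c with hc0 | hcpos
      · refine ⟨q', hq'1, by omega, ?_, ?_⟩
        · funext x
          rcases PC_cases x with ⟨p, rfl⟩ | ⟨k, rfl⟩
          · rfl
          · exact absurd k.isLt (by omega)
        · refine ⟨fun p => (hb _).1, fun p => (hb _).2,
            fun x y hxy => hincr _ _ (Sum.Lex.inl_lt_inl_iff.2 hxy), fun j hj1 hjq => ?_⟩
          obtain ⟨x, hx⟩ := hpack j hj1 hjq
          rcases PC_cases x with ⟨p, rfl⟩ | ⟨k, rfl⟩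
          · exact ⟨p, hx⟩
          · exact absurd k.isLt (by omega)
      · obtain ⟨q, rfl, hch⟩ := chain_forced hcpos hb hincr hpack
        have hU0 : U (toLex (Sum.inr (⟨0, hcpos⟩ : Fin c))) = q + 1 := hch _
        have hq1 : 1 ≤ q := by
          have h1 := (hb (toLex (Sum.inl p0))).1
          have h2 := hincr _ _ (Sum.Lex.inl_lt_inr p0 (⟨0, hcpos⟩ : Fin c))
          omega
        have hult : ∀ p : P, U (toLex (Sum.inl p)) ≤ q := by
          intro p
          have h2 := hincr _ _ (Sum.Lex.inl_lt_inr p (⟨0, hcpos⟩ : Fin c))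
          omega
        refine ⟨q, hq1, rfl, ?_, ?_⟩
        · funext x
          rcases PC_cases x with ⟨p, rfl⟩ | ⟨k, rfl⟩
          · rfl
          · rw [hch k]; rfl
        · refine ⟨fun p => (hb _).1, hult,
            fun x y hxy => hincr _ _ (Sum.Lex.inl_lt_inl_iff.2 hxy), fun j hj1 hjq => ?_⟩
          obtain ⟨x, hx⟩ := hpack j hj1 (by omega)
          rcases PC_cases x with ⟨p, rfl⟩ | ⟨k, rfl⟩
          · exact ⟨p, hx⟩
          · exfalso; rw [hch k] at hx; omega
    obtain ⟨q, hq1, rfl, hUT, hTq⟩ := main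
    haveI : Nonempty P := ⟨p0⟩
    have hrk := rk_lt_of_pit rk hrmin hrcov hTq
    obtain ⟨xm, -, hxm⟩ := Finset.exists_maximal (s := Finset.univ)
      (Finset.univ_nonempty (α := P))
    have hρ : ρ + 1 ≤ q := by
      have h1 := hrmax xm (fun y hy => lt_irrefl _ (hy.trans_le (hxm (Finset.mem_univ y) hy.le)))
      have h2 := hrk xm
      have h3 := hTq.ub xm
      omega
    have hcard : q ≤ Fintype.card P := by
      have hinj : Function.Injective (fun j : Fin q =>
          Classical.choose (hTq.packed ((j : ℕ) + 1) (by omega)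
            (by have := j.isLt; omega))) := by
        intro a b hab
        have ha := Classical.choose_spec (hTq.packed ((a : ℕ) + 1) (by omega)
          (by have := a.isLt; omega))
        have hb' := Classical.choose_spec (hTq.packed ((b : ℕ) + 1) (by omega)
          (by have := b.isLt; omega))
        simp only at hab
        rw [hab] at ha
        exact Fin.ext (by omega)
      calc q = Fintype.card (Fin q) := (Fintype.card_fin q).symm
        _ ≤ Fintype.card P := Fintype.card_le_of_injective _ hinj
    have horb : {S | ∃ n : ℕ, (kpromo (q + c))^[n] U = S}
        = extT (c := c) q '' {S | ∃ n : ℕ,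
            (kpromo q)^[n] (fun p => U (toLex (Sum.inl p))) = S} := by
      rw [hUT]
      ext S
      simp only [Set.mem_setOf_eq, Set.mem_image]
      constructor
      · rintro ⟨n, rfl⟩
        exact ⟨_, ⟨n, rfl⟩, (kpromo_ext_iter hq1 hTq n).symm⟩
      · rintro ⟨S0, ⟨n, rfl⟩, rfl⟩
        exact ⟨n, kpromo_ext_iter hq1 hTq n⟩
    rw [horb, Set.ncard_image_of_injective _ (extT_injective q)]
    exact dvd_trans
      (hm q hρ _ (fun p => ⟨hTq.lb p, hTq.ub p⟩) hTq.incr hTq.packed)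
      (hc q hρ hcard)
  · -- P empty
    rcases Nat.eq_zero_or_pos c with hc0 | hcpos
    · -- everything is empty
      have hU : ∀ S : (P ⊕ₗ Fin c) → ℕ, S = U := by
        intro S; funext x
        rcases PC_cases x with ⟨p, rfl⟩ | ⟨k, rfl⟩
        · exact absurd ⟨p⟩ hP
        · exact absurd k.isLt (by omega)
      have horb : {S | ∃ n : ℕ, (kpromo q')^[n] U = S} = {U} := by
        ext S
        simp only [Set.mem_setOf_eq, Set.mem_singleton_iff]
        exact ⟨fun _ => hU S, fun _ => ⟨0, (hU S).symm⟩⟩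
      rw [horb, Set.ncard_singleton]
      exact one_dvd _
    · obtain ⟨q, rfl, hch⟩ := chain_forced hcpos hb hincr hpack
      have hq0 : q = 0 := by
        obtain ⟨x, hx⟩ := hpack 1 le_rfl (by omega)
        rcases PC_cases x with ⟨p, rfl⟩ | ⟨k, rfl⟩
        · exact absurd ⟨p⟩ hP
        · rw [hch k] at hx; omega
      subst hq0
      have hUW : U = Wfun (c := c) 0 (fun _ => 2) 0 := by
        funext x
        rcases PC_cases x with ⟨p, rfl⟩ | ⟨k, rfl⟩
        · exact absurd ⟨p⟩ hP
        · rw [hch k, Wfun_inr]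
          split_ifs <;> omega
      have hfix : kpromo (0 + c) U = U := by
        have hkf : kfold (0 + c) U = Wfun (c := c) 0 (fun _ => 2) (c - 1) := by
          show (List.range' 2 (0 + c - 1)).foldl (fun S i => kstep i S) U = _
          rw [show (0 : ℕ) + c - 1 = c - 1 from by omega, hUW]
          exact climb_fold (fun p => absurd (⟨p⟩ : Nonempty P) hP) (c - 1) (by omega)
        funext x
        rcases PC_cases x with ⟨p, rfl⟩ | ⟨k, rfl⟩
        · exact absurd ⟨p⟩ hP
        · rw [kpromo_eval, hkf, Wfun_inr, hch k]
          have := k.isLt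
          split_ifs <;> omega
      have horb : {S | ∃ n : ℕ, (kpromo (0 + c))^[n] U = S} = {U} := by
        ext S
        simp only [Set.mem_setOf_eq, Set.mem_singleton_iff]
        constructor
        · rintro ⟨n, rfl⟩
          rw [Function.iterate_fixed hfix]
        · rintro rfl; exact ⟨0, rfl⟩
      rw [horb, Set.ncard_singleton]
      exact one_dvd _
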